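/- Let 3/2 < p < ∞. There exists a constant C = C(p) > 0 such that for every u ∈ C_c^∞(ℝ³; ℝ³): ‖u‖_{L^{4p/(p−1),4}(ℝ³)}² ≤ C ‖u‖_{L⁴(ℝ³)}^{(2p−3)/p} ‖ |u| ∇|u| ‖_{L²(ℝ³)}^{3/(2p)}, where |u|(x) denotes the Euclidean norm of the vector u(x) and ∇|u| its gradient. -/

import Mathlib

open MeasureTheory Set
open scoped ENNReal BigOperators InnerProductSpace

noncomputable section

/-- Three-dimensional Euclidean space. -/
abbrev X3 : Type := EuclideanSpace ℝ (Fin 3)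

namespace Micropolar

/-- The `i`-th coordinate unit vector of `ℝ³`. -/
def e (i : Fin 3) : X3 := EuclideanSpace.single i 1

/-- The `i`-th partial derivative of a function on `ℝ³`. -/
def pd {E : Type*} [NormedAddCommGroup E] [NormedSpace ℝ E]
    (f : X3 → E) (i : Fin 3) (x : X3) : E :=
  fderiv ℝ f x (e i)

/-- The (componentwise) Laplacian. -/
def lap {E : Type*} [NormedAddCommGroup E] [NormedSpace ℝ E]
    (f : X3 → E) (x : X3) : E :=
  ∑ i : Fin 3, pd (fun y => pd f i y) i x

/-- The divergence of a vector field on `ℝ³`. -/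
def divg (v : X3 → X3) (x : X3) : ℝ := ∑ i : Fin 3, pd v i x i

/-- The gradient of a scalar function on `ℝ³`. -/
def grad (f : X3 → ℝ) (x : X3) : X3 := ∑ i : Fin 3, pd f i x • e i

/-- The curl `∇ × v` of a vector field on `ℝ³`. -/
def curl (v : X3 → X3) (x : X3) : X3 :=
  (pd v 1 x 2 - pd v 2 x 1) • e 0 + (pd v 2 x 0 - pd v 0 x 2) • e 1 +
    (pd v 0 x 1 - pd v 1 x 0) • e 2

/-- The convective derivative `(u · ∇) v`. -/
def conv {E : Type*} [NormedAddCommGroup E] [NormedSpace ℝ E]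
    (u : X3 → X3) (v : X3 → E) (x : X3) : E :=
  ∑ i : Fin 3, u x i • pd v i x

/-- Weak (distributional) divergence-free condition. -/
def DivFreeWeak (v : X3 → X3) : Prop :=
  ∀ φ : X3 → ℝ, ContDiff ℝ (⊤ : ℕ∞) φ → HasCompactSupport φ →
    (∫ x, ⟪v x, grad φ x⟫_ℝ) = 0

/-- `g` is the `i`-th weak partial derivative of the vector field `f`. -/
def IsWeakPartial (f : X3 → X3) (i : Fin 3) (g : X3 → X3) : Prop :=
  ∀ φ : X3 → ℝ, ContDiff ℝ (⊤ : ℕ∞) φ → HasCompactSupport φ →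
    (∫ x, pd φ i x • f x) = - ∫ x, φ x • g x

/-- `G` is the weak gradient of the scalar function `g`. -/
def IsWeakGrad (g : X3 → ℝ) (G : X3 → X3) : Prop :=
  ∀ i : Fin 3, ∀ φ : X3 → ℝ, ContDiff ℝ (⊤ : ℕ∞) φ → HasCompactSupport φ →
    (∫ x, g x * pd φ i x) = - ∫ x, G x i * φ x

/-- Membership in the Sobolev space `H¹(ℝ³)` (for classically differentiable functions). -/
def MemH1 (f : X3 → X3) : Prop :=
  MemLp f 2 volume ∧ ∀ i : Fin 3, MemLp (pd f i) 2 volume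

/-- Membership in the Sobolev space `H²(ℝ³)`. -/
def MemH2 (f : X3 → X3) : Prop :=
  MemH1 f ∧ ∀ i j : Fin 3, MemLp (pd (pd f i) j) 2 volume

/-- Membership in the Sobolev space `W^{1,4}(ℝ³)`. -/
def MemW14 (f : X3 → X3) : Prop :=
  MemLp f 4 volume ∧ ∀ i : Fin 3, MemLp (pd f i) 4 volume

/-- The `H¹` distance of two vector fields. -/
def dH1 (f g : X3 → X3) : ℝ≥0∞ :=
  eLpNorm (fun x => f x - g x) 2 volume +
    ∑ i : Fin 3, eLpNorm (fun x => pd f i x - pd g i x) 2 volume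

/-- The `H²` distance of two vector fields. -/
def dH2 (f g : X3 → X3) : ℝ≥0∞ :=
  dH1 f g + ∑ i : Fin 3, ∑ j : Fin 3,
    eLpNorm (fun x => pd (pd f i) j x - pd (pd g i) j x) 2 volume

/-- The `L⁴` distance of two vector fields. -/
def dL4 (f g : X3 → X3) : ℝ≥0∞ := eLpNorm (fun x => f x - g x) 4 volume

/-- The `W^{1,4}` distance of two vector fields. -/
def dW14 (f g : X3 → X3) : ℝ≥0∞ :=
  dL4 f g + ∑ i : Fin 3, eLpNorm (fun x => pd f i x - pd g i x) 4 volume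

/-- Continuity of a curve `t ↦ u t` on a time set `s` with respect to a distance `d`. -/
def ContIn (d : (X3 → X3) → (X3 → X3) → ℝ≥0∞) (u : ℝ → X3 → X3) (s : Set ℝ) : Prop :=
  ∀ t₀ ∈ s, ∀ ε : ℝ, 0 < ε → ∃ δ > 0, ∀ t ∈ s, |t - t₀| < δ →
    d (u t) (u t₀) < ENNReal.ofReal ε

/-- `(u, ω, P)` is a classical (smooth) solution of the micropolar fluid equations
on the time set `S`:
`∂ₜu = (μ+χ)Δu - (u·∇)u - ∇P + χ∇×ω`,
`∂ₜω = γΔω + κ∇(div ω) - 2χω - (u·∇)ω + χ∇×u`, `div u = 0`. -/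
structure SolvesOn (mu chi ga ka : ℝ) (u ω : ℝ → X3 → X3) (P : ℝ → X3 → ℝ)
    (S : Set ℝ) : Prop where
  smooth_u : ContDiffOn ℝ (⊤ : ℕ∞) (fun q : ℝ × X3 => u q.1 q.2) (S ×ˢ (univ : Set X3))
  smooth_ω : ContDiffOn ℝ (⊤ : ℕ∞) (fun q : ℝ × X3 => ω q.1 q.2) (S ×ˢ (univ : Set X3))
  smooth_P : ContDiffOn ℝ (⊤ : ℕ∞) (fun q : ℝ × X3 => P q.1 q.2) (S ×ˢ (univ : Set X3))
  momentum : ∀ t ∈ S, ∀ x : X3,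
    HasDerivWithinAt (fun s => u s x)
      ((mu + chi) • lap (u t) x - conv (u t) (u t) x - grad (P t) x + chi • curl (ω t) x) S t
  angular : ∀ t ∈ S, ∀ x : X3,
    HasDerivWithinAt (fun s => ω s x)
      (ga • lap (ω t) x + ka • grad (divg (ω t)) x - (2 * chi) • ω t x
        - conv (u t) (ω t) x + chi • curl (u t) x) S t
  divfree : ∀ t ∈ S, ∀ x : X3, divg (u t) x = 0

/-- A smooth solution on `[0,T)` in the class
`u ∈ C([0,T); H¹_σ) ∩ C((0,T); H²)`, `ω ∈ C([0,T); H¹) ∩ C((0,T); H²)`. -/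
structure SmoothH1Solution (mu chi ga ka T : ℝ) (u ω : ℝ → X3 → X3) (P : ℝ → X3 → ℝ)
    (u₀ ω₀ : X3 → X3) : Prop where
  pde : SolvesOn mu chi ga ka u ω P (Ioo 0 T)
  init_u : u 0 = u₀
  init_ω : ω 0 = ω₀
  u_memH1 : ∀ t ∈ Ico (0 : ℝ) T, MemH1 (u t)
  u_div : ∀ t ∈ Ico (0 : ℝ) T, DivFreeWeak (u t)
  u_contH1 : ContIn dH1 u (Ico 0 T)
  u_memH2 : ∀ t ∈ Ioo (0 : ℝ) T, MemH2 (u t)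
  u_contH2 : ContIn dH2 u (Ioo 0 T)
  ω_memH1 : ∀ t ∈ Ico (0 : ℝ) T, MemH1 (ω t)
  ω_contH1 : ContIn dH1 ω (Ico 0 T)
  ω_memH2 : ∀ t ∈ Ioo (0 : ℝ) T, MemH2 (ω t)
  ω_contH2 : ContIn dH2 ω (Ioo 0 T)

/-- A smooth solution on `[0,T)` in the class
`u ∈ C([0,T); L⁴_σ) ∩ C((0,T); W^{1,4})`, `ω ∈ C([0,T); L⁴) ∩ C((0,T); W^{1,4})`. -/
structure SmoothL4Solution (mu chi ga ka T : ℝ) (u ω : ℝ → X3 → X3) (P : ℝ → X3 → ℝ)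
    (u₀ ω₀ : X3 → X3) : Prop where
  pde : SolvesOn mu chi ga ka u ω P (Ioo 0 T)
  init_u : u 0 = u₀
  init_ω : ω 0 = ω₀
  u_memL4 : ∀ t ∈ Ico (0 : ℝ) T, MemLp (u t) 4 volume
  u_div : ∀ t ∈ Ico (0 : ℝ) T, DivFreeWeak (u t)
  u_contL4 : ContIn dL4 u (Ico 0 T)
  u_memW14 : ∀ t ∈ Ioo (0 : ℝ) T, MemW14 (u t)
  u_contW14 : ContIn dW14 u (Ioo 0 T)
  ω_memL4 : ∀ t ∈ Ico (0 : ℝ) T, MemLp (ω t) 4 volume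
  ω_contL4 : ContIn dL4 ω (Ico 0 T)
  ω_memW14 : ∀ t ∈ Ioo (0 : ℝ) T, MemW14 (ω t)
  ω_contW14 : ContIn dW14 ω (Ioo 0 T)

section Lorentz

variable {α : Type*} [MeasurableSpace α] {E : Type*} [NormedAddCommGroup E]

/-- The distribution function `f_*(σ) = μ{x : |f(x)| > σ}`. -/
def distFn (μ : Measure α) (f : α → E) (σ : ℝ) : ℝ≥0∞ := μ {x | σ < ‖f x‖}

/-- The non-increasing rearrangement `f*(t) = inf {s > 0 : f_*(s) ≤ t}`. -/
def rearr (μ : Measure α) (f : α → E) (t : ℝ) : ℝ≥0∞ :=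
  ⨅ (s : ℝ) (_ : 0 < s ∧ distFn μ f s ≤ ENNReal.ofReal t), ENNReal.ofReal s

-- The Lorentz `L^{p,q}` (quasi-)norm, `1 ≤ p < ∞`, `1 ≤ q ≤ ∞`.
open Classical in
def lorentzNorm (μ : Measure α) (f : α → E) (p : ℝ) (q : ℝ≥0∞) : ℝ≥0∞ :=
  if q = ∞ then ⨆ (t : ℝ) (_ : 0 < t), (ENNReal.ofReal t) ^ (1 / p) * rearr μ f t
  else (ENNReal.ofReal (q.toReal / p) *
    ∫⁻ t in Ioi (0 : ℝ),
      ((ENNReal.ofReal t) ^ (1 / p) * rearr μ f t) ^ q.toReal / ENNReal.ofReal t) ^ (1 / q.toReal)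

/-- The weak-`L^p` norm `sup_{α>0} α · μ{|f| > α}^{1/p}`, `1 ≤ p < ∞`. -/
def weakNorm (μ : Measure α) (f : α → E) (p : ℝ) : ℝ≥0∞ :=
  ⨆ (a : ℝ) (_ : 0 < a), ENNReal.ofReal a * (distFn μ f a) ^ (1 / p)

-- The weak-`L^p` norm for `p ∈ [1,∞]`, with `L^{∞,∞} = L^∞`.
open Classical in
def weakNormE (μ : Measure α) (f : α → E) (p : ℝ≥0∞) : ℝ≥0∞ :=
  if p = ∞ then eLpNorm f ∞ μ else weakNorm μ f p.toReal

end Lorentz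

/-- `F ∈ L^q(0,T)` for `q ∈ [1,∞]` (`F` an extended-real-valued norm function). -/
def MemTimeLq (F : ℝ → ℝ≥0∞) (T : ℝ) (q : ℝ≥0∞) : Prop :=
  (q = ∞ → essSup F (volume.restrict (Ioo 0 T)) < ∞) ∧
  (q ≠ ∞ → ∫⁻ t in Ioo (0 : ℝ) T, (F t) ^ q.toReal < ∞)

/-- A space-compactly-supported smooth test field on `[0,T]` vanishing at `t = T`,
divergence free. -/
structure TestFieldV (T : ℝ) (φ : ℝ → X3 → X3) : Prop where
  smooth : ContDiff ℝ (⊤ : ℕ∞) (fun q : ℝ × X3 => φ q.1 q.2)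
  supp : ∃ K : Set X3, IsCompact K ∧ ∀ t x, x ∉ K → φ t x = 0
  divfree : ∀ t x, divg (φ t) x = 0
  final : ∀ x, φ T x = 0

/-- A space-compactly-supported smooth test field on `[0,T]` vanishing at `t = T`. -/
structure TestField (T : ℝ) (ψ : ℝ → X3 → X3) : Prop where
  smooth : ContDiff ℝ (⊤ : ℕ∞) (fun q : ℝ × X3 => ψ q.1 q.2)
  supp : ∃ K : Set X3, IsCompact K ∧ ∀ t x, x ∉ K → ψ t x = 0
  final : ∀ x, ψ T x = 0

/-- A (Leray–Hopf type) weak solution of the micropolar fluid equations on `[0,T)`,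
with weak spatial derivative fields `du`, `dω`. -/
structure WeakSolution (mu chi ga ka T : ℝ) (u ω : ℝ → X3 → X3)
    (du dω : ℝ → Fin 3 → X3 → X3) (u₀ ω₀ : X3 → X3) : Prop where
  u_linfty : essSup (fun t => eLpNorm (u t) 2 volume) (volume.restrict (Ioo 0 T)) < ∞
  ω_linfty : essSup (fun t => eLpNorm (ω t) 2 volume) (volume.restrict (Ioo 0 T)) < ∞
  u_mem : ∀ᵐ t ∂(volume.restrict (Ioo 0 T)),
    MemLp (u t) 2 volume ∧ DivFreeWeak (u t) ∧
      ∀ i, MemLp (du t i) 2 volume ∧ IsWeakPartial (u t) i (du t i)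
  ω_mem : ∀ᵐ t ∂(volume.restrict (Ioo 0 T)),
    MemLp (ω t) 2 volume ∧ ∀ i, MemLp (dω t i) 2 volume ∧ IsWeakPartial (ω t) i (dω t i)
  u_l2h1 : ∫⁻ t in Ioo (0 : ℝ) T, ∑ i : Fin 3, (eLpNorm (du t i) 2 volume) ^ 2 < ∞
  ω_l2h1 : ∫⁻ t in Ioo (0 : ℝ) T, ∑ i : Fin 3, (eLpNorm (dω t i) 2 volume) ^ 2 < ∞
  weak_u : ∀ φ : ℝ → X3 → X3, TestFieldV T φ →
    (∫ t in (0 : ℝ)..T,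
      ((- ∫ x, ⟪u t x, deriv (fun s => φ s x) t⟫_ℝ)
        + ((mu + chi) * ∑ i : Fin 3, ∫ x, ⟪du t i x, pd (φ t) i x⟫_ℝ)
        - (∫ x, ⟪conv (u t) (φ t) x, u t x⟫_ℝ)
        + (chi * ∫ x, ⟪curl (φ t) x, ω t x⟫_ℝ)))
      = ∫ x, ⟪u₀ x, φ 0 x⟫_ℝ
  weak_ω : ∀ ψ : ℝ → X3 → X3, TestField T ψ →
    (∫ t in (0 : ℝ)..T,
      ((- ∫ x, ⟪ω t x, deriv (fun s => ψ s x) t⟫_ℝ)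
        + (ga * ∑ i : Fin 3, ∫ x, ⟪dω t i x, pd (ψ t) i x⟫_ℝ)
        + (ka * ∫ x, (∑ i : Fin 3, dω t i x i) * divg (ψ t) x)
        + (2 * chi * ∫ x, ⟪ω t x, ψ t x⟫_ℝ)
        - (∫ x, ⟪conv (u t) (ψ t) x, ω t x⟫_ℝ)
        + (chi * ∫ x, ⟪curl (ψ t) x, u t x⟫_ℝ)))
      = ∫ x, ⟪ω₀ x, ψ 0 x⟫_ℝ

/-- The energy inequality for a weak solution of the micropolar fluid equations. -/
def EnergyIneq (mu chi ga ka T : ℝ) (u ω : ℝ → X3 → X3)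
    (du dω : ℝ → Fin 3 → X3 → X3) (u₀ ω₀ : X3 → X3) : Prop :=
  ∀ t : ℝ, 0 < t → t ≤ T →
    (∫ x, ‖u t x‖ ^ 2) + (∫ x, ‖ω t x‖ ^ 2)
      + 2 * mu * (∫ s in (0 : ℝ)..t, ∑ i : Fin 3, ∫ x, ‖du s i x‖ ^ 2)
      + 2 * ga * (∫ s in (0 : ℝ)..t, ∑ i : Fin 3, ∫ x, ‖dω s i x‖ ^ 2)
      + 2 * ka * (∫ s in (0 : ℝ)..t, ∫ x, (∑ i : Fin 3, dω s i x i) ^ 2)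
      + 2 * chi * (∫ s in (0 : ℝ)..t, ∫ x, ‖ω s x‖ ^ 2)
      ≤ (∫ x, ‖u₀ x‖ ^ 2) + ∫ x, ‖ω₀ x‖ ^ 2

/-- `P` is the pressure associated with the velocity `u`,
i.e. `ΔP = -∑ᵢⱼ ∂ᵢ∂ⱼ(uᵢuⱼ)` in the sense of distributions
(equivalently `P = ∑ᵢⱼ RᵢRⱼuᵢuⱼ`). -/
def IsPressureOf (P : X3 → ℝ) (u : X3 → X3) : Prop :=
  ∀ φ : X3 → ℝ, ContDiff ℝ (⊤ : ℕ∞) φ → HasCompactSupport φ →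
    (∫ x, P x * lap φ x) =
      - ∑ i : Fin 3, ∑ j : Fin 3, ∫ x, u x i * u x j * pd (fun y => pd φ i y) j x

/-- `(u, ω)` coincides a.e. on the time set `S` with a classical smooth solution. -/
def RegularOn (mu chi ga ka : ℝ) (S : Set ℝ) (u ω : ℝ → X3 → X3) : Prop :=
  ∃ u' ω' : ℝ → X3 → X3, ∃ P' : ℝ → X3 → ℝ,
    SolvesOn mu chi ga ka u' ω' P' S ∧
      ∀ t ∈ S, (∀ᵐ x : X3 ∂volume, u' t x = u t x) ∧ ∀ᵐ x : X3 ∂volume, ω' t x = ω t x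


open scoped NNReal
open intervalIntegral

lemma grad_apply (f : X3 → ℝ) (x : X3) (i : Fin 3) : grad f x i = pd f i x := by
  have h : grad f x i = ∑ j : Fin 3, (pd f j x • e j) i :=
    by rw [grad, WithLp.ofLp_sum, Finset.sum_apply]
  rw [h]
  simp [e, EuclideanSpace.single_apply]

lemma fderiv_norm_sq_eq (u : X3 → X3) (hu : ContDiff ℝ (⊤ : ℕ∞) u) (x : X3) :
    fderiv ℝ (fun y => ‖u y‖ ^ 2) x
      = 2 • innerSL ℝ (‖u x‖ • grad (fun y => ‖u y‖) x) := by
  set Du := fderiv ℝ u x with hDu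
  have hdu : HasFDerivAt u Du x := (hu.differentiable (by simp) x).hasFDerivAt
  have h2 : HasFDerivAt (fun y => ‖u y‖ ^ 2) (2 • (innerSL ℝ (u x)).comp Du) x := hdu.norm_sq
  rw [h2.fderiv]
  have key : ∀ i : Fin 3, (‖u x‖ • grad (fun y => ‖u y‖) x) i = ⟪u x, Du (e i)⟫_ℝ := by
    intro i
    by_cases h0 : u x = 0
    · simp [h0]
    · -- differentiability of the norm
      have hne : ‖u x‖ ^ 2 ≠ 0 := pow_ne_zero 2 (norm_ne_zero_iff.2 h0)
      have hsq : HasDerivAt Real.sqrt (1 / (2 * Real.sqrt (‖u x‖ ^ 2))) (‖u x‖ ^ 2) :=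
        Real.hasDerivAt_sqrt hne
      have hg : HasFDerivAt (fun y => ‖u y‖)
          ((1 / (2 * Real.sqrt (‖u x‖ ^ 2))) • (2 • (innerSL ℝ (u x)).comp Du)) x := by
        have := hsq.comp_hasFDerivAt x h2
        refine this.congr_of_eventuallyEq (Filter.Eventually.of_forall fun y => ?_)
        simp [Function.comp, Real.sqrt_sq (norm_nonneg (u y))]
      have hpd : pd (fun y => ‖u y‖) i x = ⟪u x, Du (e i)⟫_ℝ / ‖u x‖ := by
        rw [pd, hg.fderiv]
        rw [Real.sqrt_sq (norm_nonneg _)]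
        simp only [ContinuousLinearMap.smul_apply, ContinuousLinearMap.coe_smul',
          Pi.smul_apply, ContinuousLinearMap.comp_apply, innerSL_apply_apply, smul_eq_mul]
        field_simp
        ring
      simp only [PiLp.smul_apply, smul_eq_mul, grad_apply, hpd]
      rw [mul_div_cancel₀]
      exact norm_ne_zero_iff.2 h0
  ext v
  simp only [ContinuousLinearMap.smul_apply, ContinuousLinearMap.comp_apply, innerSL_apply_apply]
  have hv : ⟪‖u x‖ • grad (fun y => ‖u y‖) x, v⟫_ℝ = ⟪u x, Du v⟫_ℝ := by
    have hbasis : v = ∑ i : Fin 3, v i • e i := by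
      ext j
      have h : (∑ i : Fin 3, v i • e i) j = ∑ i : Fin 3, (v i • e i) j :=
        by rw [WithLp.ofLp_sum, Finset.sum_apply]
      rw [h]
      simp [e, EuclideanSpace.single_apply]
    calc ⟪‖u x‖ • grad (fun y => ‖u y‖) x, v⟫_ℝ
        = ∑ i : Fin 3, (‖u x‖ • grad (fun y => ‖u y‖) x) i * v i := by
          simp [PiLp.inner_apply, RCLike.inner_apply]
          exact Finset.sum_congr rfl fun i _ => by ring
      _ = ∑ i : Fin 3, v i * ⟪u x, Du (e i)⟫_ℝ := by
          simp_rw [key]; exact Finset.sum_congr rfl fun i _ => mul_comm _ _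
      _ = ⟪u x, Du (∑ i : Fin 3, v i • e i)⟫_ℝ := by
          rw [map_sum, inner_sum]
          refine Finset.sum_congr rfl fun i _ => ?_
          rw [ContinuousLinearMap.map_smul, real_inner_smul_right]
      _ = ⟪u x, Du v⟫_ℝ := by rw [← hbasis]
  simp [hv]

lemma norm_fderiv_norm_sq (u : X3 → X3) (hu : ContDiff ℝ (⊤ : ℕ∞) u) (x : X3) :
    ‖fderiv ℝ (fun y => ‖u y‖ ^ 2) x‖
      = 2 * ‖‖u x‖ • grad (fun y => ‖u y‖) x‖ := by
  rw [fderiv_norm_sq_eq u hu x, ← Nat.cast_smul_eq_nsmul ℝ, norm_smul, innerSL_apply_norm]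
  norm_num

lemma sobolev_l12 (u : X3 → X3) (hu : ContDiff ℝ (⊤ : ℕ∞) u) (hc : HasCompactSupport u) :
    eLpNorm u 12 volume ^ (2:ℝ) ≤
      (ENNReal.ofReal
        (2 * ((eLpNormLESNormFDerivOfEqInnerConst (volume : Measure X3) 2 : NNReal) : ℝ) + 1)) *
        eLpNorm (fun x => ‖u x‖ • grad (fun y => ‖u y‖) x) 2 volume := by
  set f2 : X3 → ℝ := fun x => ‖u x‖ ^ 2 with hf2
  have hf2c : ContDiff ℝ 1 f2 := (hu.of_le (mod_cast le_top)).norm_sq ℝ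
  have hf2s : HasCompactSupport f2 := by
    have : f2 = (fun w : X3 => ‖w‖ ^ 2) ∘ u := rfl
    rw [this]
    exact hc.comp_left (by simp)
  have hn : 0 < Module.finrank ℝ X3 := by
    rw [finrank_euclideanSpace_fin]; norm_num
  have hp' : (((6:ℝ≥0)) : ℝ)⁻¹ = ((2:ℝ≥0))⁻¹ - ((Module.finrank ℝ X3 : ℝ))⁻¹ := by
    rw [finrank_euclideanSpace_fin]; norm_num
  have hsob := eLpNorm_le_eLpNorm_fderiv_of_eq_inner (volume : Measure X3)
    hf2c hf2s (p := 2) (p' := 6) one_le_two hn hp'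
  -- rewrite LHS
  have hL : eLpNorm f2 ((6:ℝ≥0) : ℝ≥0∞) volume = eLpNorm u 12 volume ^ (2:ℝ) := by
    have h6 : ((6:ℝ≥0) : ℝ≥0∞) = 6 := by norm_cast
    have hfun : f2 = fun x => ‖u x‖ ^ (2:ℝ) := by
      funext x
      simp only [hf2]
      rw [← Real.rpow_natCast ‖u x‖ 2]; norm_num
    rw [h6, hfun, eLpNorm_norm_rpow u (by norm_num : (0:ℝ) < 2),
      show (6 * ENNReal.ofReal 2 : ℝ≥0∞) = 12 by rw [ENNReal.ofReal_ofNat]; norm_num]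
  -- rewrite RHS
  have hR : eLpNorm (fderiv ℝ f2) ((2:ℝ≥0) : ℝ≥0∞) volume
      = 2 * eLpNorm (fun x => ‖u x‖ • grad (fun y => ‖u y‖) x) 2 volume := by
    rw [show ((2:ℝ≥0) : ℝ≥0∞) = 2 by norm_cast]
    rw [← eLpNorm_norm (fderiv ℝ f2)]
    have h1 : (fun x => ‖fderiv ℝ f2 x‖)
        = fun x => (2:ℝ) * ‖‖u x‖ • grad (fun y => ‖u y‖) x‖ := by
      funext x; exact norm_fderiv_norm_sq u hu x
    rw [h1]
    have h2 : (fun x => (2:ℝ) * ‖‖u x‖ • grad (fun y => ‖u y‖) x‖)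
        = (2:ℝ) • (fun x => ‖‖u x‖ • grad (fun y => ‖u y‖) x‖) := by
      funext x; simp
    rw [h2, eLpNorm_const_smul, eLpNorm_norm]
    rw [Real.enorm_eq_ofReal (by norm_num : (0:ℝ) ≤ 2), ENNReal.ofReal_ofNat]
  rw [hL, hR] at hsob
  refine hsob.trans ?_
  rw [← mul_assoc]
  gcongr
  set c : NNReal := eLpNormLESNormFDerivOfEqInnerConst (volume : Measure X3) 2 with hc2
  calc ((eLpNormLESNormFDerivOfEqInnerConst (volume : Measure X3) ((2:ℝ≥0):ℝ) : NNReal) : ℝ≥0∞) * 2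
      = ENNReal.ofReal ((c:ℝ)) * ENNReal.ofReal 2 := by
        rw [ENNReal.ofReal_coe_nnreal, ENNReal.ofReal_ofNat]
        norm_num
        simp [hc2]
    _ = ENNReal.ofReal ((c:ℝ) * 2) := (ENNReal.ofReal_mul c.coe_nonneg).symm
    _ ≤ ENNReal.ofReal (2 * (c:ℝ) + 1) := ENNReal.ofReal_le_ofReal (by linarith)

lemma rearr_le_eLpNorm {f : X3 → X3} (hf : AEStronglyMeasurable f volume)
    {q : ℝ} (hq : 0 < q) {t : ℝ} (ht : 0 < t) :
    rearr volume f t ≤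
      eLpNorm f (ENNReal.ofReal q) volume * (ENNReal.ofReal t) ^ (-(1/q)) := by
  set A := eLpNorm f (ENNReal.ofReal q) volume with hA
  set R := A * (ENNReal.ofReal t) ^ (-(1/q)) with hRdef
  have ht0 : ENNReal.ofReal t ≠ 0 := by simp [ENNReal.ofReal_eq_zero]; linarith
  have ht' : ENNReal.ofReal t ≠ ∞ := ENNReal.ofReal_ne_top
  refine ENNReal.le_of_forall_pos_le_add (fun ε hε hR => ?_)
  have hRtop : R ≠ ∞ := hR.ne
  set s : ℝ := R.toReal + ε with hs
  have hs0 : 0 < s := by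
    have : (0:ℝ) < ε := hε
    have := ENNReal.toReal_nonneg (a := R)
    linarith
  have hsR : R ≤ ENNReal.ofReal s := by
    rw [hs]
    calc R = ENNReal.ofReal R.toReal := (ENNReal.ofReal_toReal hRtop).symm
    _ ≤ ENNReal.ofReal (R.toReal + ε) := by
        apply ENNReal.ofReal_le_ofReal
        have : (0:ℝ) < ε := hε
        linarith
  have hos0 : ENNReal.ofReal s ≠ 0 := by simp [ENNReal.ofReal_eq_zero]; linarith
  have hos' : ENNReal.ofReal s ≠ ∞ := ENNReal.ofReal_ne_top
  -- key: distFn f s ≤ ofReal t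
  have hq0 : ENNReal.ofReal q ≠ 0 := by simp [ENNReal.ofReal_eq_zero]; linarith
  have hqr : (ENNReal.ofReal q).toReal = q := ENNReal.toReal_ofReal hq.le
  have cheb := meas_ge_le_mul_pow_eLpNorm_enorm volume hq0 ENNReal.ofReal_ne_top hf
    (ε := ENNReal.ofReal s) hos0 (fun h => absurd h hos')
  rw [hqr] at cheb
  have hsub : {x : X3 | s < ‖f x‖} ⊆ {x : X3 | ENNReal.ofReal s ≤ (‖f x‖₊ : ℝ≥0∞)} := by
    intro x hx
    simp only [mem_setOf_eq] at hx ⊢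
    rw [show ((‖f x‖₊ : ℝ≥0∞)) = ENNReal.ofReal ‖f x‖ from (ofReal_norm _).symm]
    exact ENNReal.ofReal_le_ofReal hx.le
  have hchain : distFn volume f s ≤ ENNReal.ofReal t := by
    refine le_trans (le_trans (measure_mono hsub) cheb) ?_
    -- (ofReal s)⁻¹ ^ q * A ^ q ≤ ofReal t
    have hRq : R ^ q * ENNReal.ofReal t = A ^ q := by
      rw [hRdef, ENNReal.mul_rpow_of_nonneg _ _ hq.le, ← ENNReal.rpow_mul, mul_assoc]
      have : -(1/q) * q = -1 := by field_simp
      rw [this, ENNReal.rpow_neg_one, ENNReal.inv_mul_cancel ht0 ht', mul_one]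
    calc (ENNReal.ofReal s)⁻¹ ^ q * A ^ q
        = (ENNReal.ofReal s)⁻¹ ^ q * (R ^ q * ENNReal.ofReal t) := by rw [hRq]
      _ ≤ (ENNReal.ofReal s)⁻¹ ^ q * ((ENNReal.ofReal s) ^ q * ENNReal.ofReal t) := by
          gcongr
      _ = ((ENNReal.ofReal s)⁻¹ * ENNReal.ofReal s) ^ q * ENNReal.ofReal t := by
          rw [ENNReal.mul_rpow_of_nonneg _ _ hq.le, mul_assoc]
      _ = ENNReal.ofReal t := by
          rw [ENNReal.inv_mul_cancel hos0 hos', ENNReal.one_rpow, one_mul]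
  have : rearr volume f t ≤ ENNReal.ofReal s := iInf₂_le s ⟨hs0, hchain⟩
  refine this.trans ?_
  rw [hs, ENNReal.ofReal_add ENNReal.toReal_nonneg (by positivity),
    ENNReal.ofReal_toReal hRtop, ENNReal.ofReal_coe_nnreal]

lemma lint_Ioc_rpow {c T : ℝ} (hc : -1 < c) (hT : 0 < T) :
    (∫⁻ t in Ioc (0:ℝ) T, (ENNReal.ofReal t) ^ c)
      = ENNReal.ofReal (T ^ (c+1) / (c+1)) := by
  have hcongr : (∫⁻ t in Ioc (0:ℝ) T, (ENNReal.ofReal t) ^ c)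
      = ∫⁻ t in Ioc (0:ℝ) T, ENNReal.ofReal (t ^ c) := by
    refine setLIntegral_congr_fun measurableSet_Ioc ?_
    intro t ht
    exact ENNReal.ofReal_rpow_of_pos ht.1
  have hint : IntegrableOn (fun t : ℝ => t ^ c) (Ioc (0:ℝ) T) volume :=
    (intervalIntegrable_iff_integrableOn_Ioc_of_le hT.le).1 (intervalIntegrable_rpow' hc)
  have hnn : 0 ≤ᵐ[volume.restrict (Ioc (0:ℝ) T)] fun t : ℝ => t ^ c := by
    refine (ae_restrict_iff' measurableSet_Ioc).2 (Filter.Eventually.of_forall ?_)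
    intro t ht
    exact Real.rpow_nonneg ht.1.le c
  rw [hcongr, ← ofReal_integral_eq_lintegral_ofReal hint hnn]
  congr 1
  rw [← integral_of_le hT.le, integral_rpow (Or.inl hc)]
  rw [Real.zero_rpow (by linarith : c + 1 ≠ 0)]
  ring

lemma lint_Ioi_rpow {d T : ℝ} (hd : d < -1) (hT : 0 < T) :
    (∫⁻ t in Ioi T, (ENNReal.ofReal t) ^ d)
      = ENNReal.ofReal (-T ^ (d+1) / (d+1)) := by
  have hcongr : (∫⁻ t in Ioi T, (ENNReal.ofReal t) ^ d)
      = ∫⁻ t in Ioi T, ENNReal.ofReal (t ^ d) := by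
    refine setLIntegral_congr_fun measurableSet_Ioi ?_
    intro t ht
    exact ENNReal.ofReal_rpow_of_pos (hT.trans ht)
  have hint : IntegrableOn (fun t : ℝ => t ^ d) (Ioi T) volume :=
    integrableOn_Ioi_rpow_of_lt hd hT
  have hnn : 0 ≤ᵐ[volume.restrict (Ioi T)] fun t : ℝ => t ^ d := by
    refine (ae_restrict_iff' measurableSet_Ioi).2 (Filter.Eventually.of_forall ?_)
    intro t ht
    exact Real.rpow_nonneg (hT.trans ht).le d
  rw [hcongr, ← ofReal_integral_eq_lintegral_ofReal hint hnn]
  congr 1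
  exact integral_Ioi_rpow_of_lt hd hT

lemma integrand_bound {x C R : ℝ≥0∞} (hx0 : x ≠ 0) (hx' : x ≠ ∞)
    {e1 e2 e3 : ℝ} (hR : R ≤ C * x ^ e2) (he3 : e3 = (e1 + e2) * 4 + (-1)) :
    (x ^ e1 * R) ^ (4:ℝ) / x ≤ C ^ (4:ℝ) * x ^ e3 := by
  calc (x ^ e1 * R) ^ (4:ℝ) / x ≤ (x ^ e1 * (C * x ^ e2)) ^ (4:ℝ) / x := by gcongr
    _ = (C * x ^ (e1 + e2)) ^ (4:ℝ) / x := by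
        rw [ENNReal.rpow_add e1 e2 hx0 hx']; ring_nf
    _ = C ^ (4:ℝ) * x ^ ((e1 + e2) * 4) / x := by
        rw [ENNReal.mul_rpow_of_nonneg _ _ (by norm_num : (0:ℝ) ≤ 4), ← ENNReal.rpow_mul]
    _ = C ^ (4:ℝ) * x ^ e3 := by
        rw [he3, ENNReal.rpow_add _ _ hx0 hx', ENNReal.rpow_neg_one,
          div_eq_mul_inv, mul_assoc]

lemma powcalc1 {a b : ℝ} (ha : 0 < a) (hb : 0 < b) (s : ℝ) :
    b ^ (4:ℝ) * ((a/b) ^ (6:ℝ)) ^ s = a ^ (6*s) * b ^ (4 - 6*s) := by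
  rw [← Real.rpow_mul (by positivity), Real.div_rpow ha.le hb.le,
    Real.rpow_sub hb]
  ring

lemma powcalc2 {a b : ℝ} (ha : 0 < a) (hb : 0 < b) (s : ℝ) :
    a ^ (4:ℝ) * ((a/b) ^ (6:ℝ)) ^ s = a ^ (4 + 6*s) * b ^ (-(6*s)) := by
  rw [← Real.rpow_mul (by positivity), Real.div_rpow ha.le hb.le,
    Real.rpow_add ha, Real.rpow_neg hb.le]
  field_simp

lemma lorentz_core (p : ℝ) (hp : 3 / 2 < p) (u : X3 → X3)
    (hm : AEStronglyMeasurable u volume)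
    (hA : eLpNorm u 4 volume ≠ ∞) (hB : eLpNorm u 12 volume ≠ ∞) :
    lorentzNorm volume u (4 * p / (p - 1)) 4 ^ (2:ℝ) ≤
      ENNReal.ofReal (Real.sqrt ((p-1)/p * (3*p/(2*p-3) + p))) *
        eLpNorm u 4 volume ^ ((2*p-3)/p) * eLpNorm u 12 volume ^ (3/p) := by
  have hp0 : (0:ℝ) < p := by linarith
  have hpm : (0:ℝ) < p - 1 := by linarith
  have h2p3 : (0:ℝ) < 2*p - 3 := by linarith
  set r : ℝ := 4 * p / (p - 1) with hrdef
  have hr0 : 0 < r := by positivity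
  set al : ℝ := (p - 1) / p with haldef
  have hal_eq : 4 / r = al := by rw [hrdef, haldef]; field_simp
  have honer : 1 / r = al / 4 := by rw [← hal_eq]; ring
  have hal13 : 1/3 < al := by rw [haldef, div_lt_div_iff₀ (by norm_num) hp0]; linarith
  have hal1 : al < 1 := by rw [haldef, div_lt_one hp0]; linarith
  have hal0 : 0 < al := by linarith
  set c : ℝ := al - 4/3 with hcdef
  set d : ℝ := al - 2 with hddef
  have hc : -1 < c := by rw [hcdef]; linarith
  have hd : d < -1 := by rw [hddef]; linarith
  have hc1 : c + 1 = al - 1/3 := by rw [hcdef]; ring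
  have hd1 : d + 1 = al - 1 := by rw [hddef]; ring
  have hq4 : ((4:ℝ≥0∞)).toReal = (4:ℝ) := by simp
  rw [lorentzNorm, if_neg (by norm_num)]
  simp only [hq4]
  set I : ℝ≥0∞ := ∫⁻ t in Ioi (0:ℝ),
    ((ENNReal.ofReal t) ^ (1/r) * rearr volume u t) ^ (4:ℝ) / ENNReal.ofReal t with hIdef
  by_cases hA0 : eLpNorm u 4 volume = 0
  · -- u = 0 a.e.
    have hre : ∀ t : ℝ, 0 < t → rearr volume u t = 0 := by
      intro t ht
      have h := rearr_le_eLpNorm hm (q := 4) (by norm_num) ht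
      rw [show ENNReal.ofReal (4:ℝ) = 4 by simp [ENNReal.ofReal_ofNat], hA0, zero_mul] at h
      exact le_antisymm h zero_le
    have hptw : ∀ t ∈ Ioi (0:ℝ),
        ((ENNReal.ofReal t) ^ (1/r) * rearr volume u t) ^ (4:ℝ) / ENNReal.ofReal t = 0 := by
      intro t ht
      rw [hre t ht, mul_zero, ENNReal.zero_rpow_of_pos (by norm_num), ENNReal.zero_div]
    have hI0 : I = 0 := by
      rw [hIdef, setLIntegral_congr_fun measurableSet_Ioi
        hptw, lintegral_zero]
    rw [hI0, mul_zero, ENNReal.zero_rpow_of_pos (by norm_num),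
      ENNReal.zero_rpow_of_pos (by norm_num)]
    exact zero_le
  · have hB0 : eLpNorm u 12 volume ≠ 0 := by
      intro h
      exact hA0 ((eLpNorm_eq_zero_iff hm (by norm_num)).2
        ((eLpNorm_eq_zero_iff hm (by norm_num)).1 h))
    set A : ℝ≥0∞ := eLpNorm u 4 volume with hAdef
    set B : ℝ≥0∞ := eLpNorm u 12 volume with hBdef
    set a : ℝ := A.toReal with hadef
    set b : ℝ := B.toReal with hbdef
    have ha : 0 < a := ENNReal.toReal_pos hA0 hA
    have hb : 0 < b := ENNReal.toReal_pos hB0 hB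
    have hAa : A = ENNReal.ofReal a := (ENNReal.ofReal_toReal hA).symm
    have hBb : B = ENNReal.ofReal b := (ENNReal.ofReal_toReal hB).symm
    set T : ℝ := (a / b) ^ (6:ℝ) with hTdef
    have hT : 0 < T := by positivity
    -- rearrangement bounds
    have h4 : ∀ t : ℝ, 0 < t →
        rearr volume u t ≤ A * (ENNReal.ofReal t) ^ (-(1/4) : ℝ) := by
      intro t ht
      have h := rearr_le_eLpNorm hm (q := 4) (by norm_num) ht
      rwa [show ENNReal.ofReal (4:ℝ) = 4 by simp [ENNReal.ofReal_ofNat]] at h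
    have h12 : ∀ t : ℝ, 0 < t →
        rearr volume u t ≤ B * (ENNReal.ofReal t) ^ (-(1/12) : ℝ) := by
      intro t ht
      have h := rearr_le_eLpNorm hm (q := 12) (by norm_num) ht
      rwa [show ENNReal.ofReal (12:ℝ) = 12 by simp [ENNReal.ofReal_ofNat]] at h
    -- split the integral
    have hsplit : I = (∫⁻ t in Ioc (0:ℝ) T,
        ((ENNReal.ofReal t) ^ (1/r) * rearr volume u t) ^ (4:ℝ) / ENNReal.ofReal t)
        + ∫⁻ t in Ioi T,
        ((ENNReal.ofReal t) ^ (1/r) * rearr volume u t) ^ (4:ℝ) / ENNReal.ofReal t := by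
      rw [hIdef, ← Ioc_union_Ioi_eq_Ioi hT.le,
        lintegral_union measurableSet_Ioi (Ioc_disjoint_Ioi le_rfl)]
    have hmeas : ∀ cc : ℝ, ∀ CC : ℝ≥0∞, Measurable (fun t : ℝ => CC * (ENNReal.ofReal t) ^ cc) :=
      fun cc CC => (ENNReal.measurable_ofReal.pow_const cc).const_mul CC
    have hBfin : B ^ (4:ℝ) ≠ ∞ := ENNReal.rpow_ne_top_of_nonneg (by norm_num) hB
    have hAfin : A ^ (4:ℝ) ≠ ∞ := ENNReal.rpow_ne_top_of_nonneg (by norm_num) hA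
    have he3c : c = (1/r + (-(1/12))) * 4 + (-1) := by
      rw [hcdef, honer]; ring
    have he3d : d = (1/r + (-(1/4))) * 4 + (-1) := by
      rw [hddef, honer]; ring
    have hpc1 : ∫⁻ t in Ioc (0:ℝ) T,
        ((ENNReal.ofReal t) ^ (1/r) * rearr volume u t) ^ (4:ℝ) / ENNReal.ofReal t
        ≤ B ^ (4:ℝ) * ENNReal.ofReal (T ^ (c+1) / (c+1)) := by
      calc ∫⁻ t in Ioc (0:ℝ) T,
          ((ENNReal.ofReal t) ^ (1/r) * rearr volume u t) ^ (4:ℝ) / ENNReal.ofReal t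
          ≤ ∫⁻ t in Ioc (0:ℝ) T, B ^ (4:ℝ) * (ENNReal.ofReal t) ^ c := by
            refine setLIntegral_mono (hmeas c _) (fun t ht => ?_)
            exact integrand_bound (by simp [ENNReal.ofReal_eq_zero]; linarith [ht.1])
              ENNReal.ofReal_ne_top (h12 t ht.1) he3c
        _ = B ^ (4:ℝ) * ∫⁻ t in Ioc (0:ℝ) T, (ENNReal.ofReal t) ^ c :=
            lintegral_const_mul' _ _ hBfin
        _ = B ^ (4:ℝ) * ENNReal.ofReal (T ^ (c+1) / (c+1)) := by
            rw [lint_Ioc_rpow hc hT]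
    have hpc2 : ∫⁻ t in Ioi T,
        ((ENNReal.ofReal t) ^ (1/r) * rearr volume u t) ^ (4:ℝ) / ENNReal.ofReal t
        ≤ A ^ (4:ℝ) * ENNReal.ofReal (-T ^ (d+1) / (d+1)) := by
      calc ∫⁻ t in Ioi T,
          ((ENNReal.ofReal t) ^ (1/r) * rearr volume u t) ^ (4:ℝ) / ENNReal.ofReal t
          ≤ ∫⁻ t in Ioi T, A ^ (4:ℝ) * (ENNReal.ofReal t) ^ d := by
            refine setLIntegral_mono (hmeas d _) (fun t ht => ?_)
            have ht0 : 0 < t := hT.trans ht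
            exact integrand_bound (by simp [ENNReal.ofReal_eq_zero]; linarith)
              ENNReal.ofReal_ne_top (h4 t ht0) he3d
        _ = A ^ (4:ℝ) * ∫⁻ t in Ioi T, (ENNReal.ofReal t) ^ d :=
            lintegral_const_mul' _ _ hAfin
        _ = A ^ (4:ℝ) * ENNReal.ofReal (-T ^ (d+1) / (d+1)) := by
            rw [lint_Ioi_rpow hd hT]
    -- numeric combination
    set K1 : ℝ := 3*p/(2*p-3) + p with hK1def
    have hK1 : 0 < K1 := by rw [hK1def]; positivity
    set M : ℝ := a ^ (6*al - 2) * b ^ (6 - 6*al) * K1 with hMdef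
    have hM : 0 < M := by rw [hMdef]; positivity
    have hco1 : T ^ (c+1) / (c+1) = T ^ (c+1) * (3*p/(2*p-3)) := by
      have : c + 1 = (2*p-3)/(3*p) := by rw [hc1, haldef]; field_simp; ring
      rw [this, div_eq_mul_inv, inv_div]
    have hco2 : -T ^ (d+1) / (d+1) = T ^ (d+1) * p := by
      have : d + 1 = -(1/p) := by rw [hd1, haldef]; field_simp; ring
      rw [this]
      field_simp
    rw [hco1] at hpc1
    rw [hco2] at hpc2
    have hTc : (0:ℝ) ≤ T ^ (c+1) := Real.rpow_nonneg hT.le _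
    have hTd : (0:ℝ) ≤ T ^ (d+1) := Real.rpow_nonneg hT.le _
    have hfrac : (0:ℝ) ≤ 3*p/(2*p-3) := div_nonneg (by linarith) (by linarith)
    have hIM : I ≤ ENNReal.ofReal M := by
      rw [hsplit]
      refine le_trans (add_le_add hpc1 hpc2) ?_
      rw [hAa, hBb,
        ENNReal.ofReal_rpow_of_pos ha, ENNReal.ofReal_rpow_of_pos hb,
        ← ENNReal.ofReal_mul (by positivity), ← ENNReal.ofReal_mul (by positivity),
        ← ENNReal.ofReal_add
          (mul_nonneg (by positivity) (mul_nonneg hTc hfrac))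
          (mul_nonneg (by positivity) (mul_nonneg hTd hp0.le))]
      refine ENNReal.ofReal_le_ofReal (le_of_eq ?_)
      rw [hTdef]
      rw [← mul_assoc, powcalc1 ha hb (c+1), ← mul_assoc, powcalc2 ha hb (d+1)]
      rw [hc1, hd1, hMdef, hK1def]
      have e1 : 6*(al - 1/3) = 6*al - 2 := by ring
      rw [e1]
      rw [show (4:ℝ) - (6*al - 2) = 6 - 6*al by ring,
        show (4:ℝ) + 6*(al - 1) = 6*al - 2 by ring,
        show -(6*(al - (1:ℝ))) = 6 - 6*al by ring]
      ring
    -- final computation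
    calc ((ENNReal.ofReal (4/r) * I) ^ ((1:ℝ)/4)) ^ (2:ℝ)
        ≤ ((ENNReal.ofReal al * ENNReal.ofReal M) ^ ((1:ℝ)/4)) ^ (2:ℝ) := by
          gcongr
          · rw [hal_eq]
        _ = ENNReal.ofReal (al * M) ^ ((1:ℝ)/2) := by
          rw [← ENNReal.rpow_mul, ← ENNReal.ofReal_mul hal0.le]
          norm_num
        _ = ENNReal.ofReal ((al * M) ^ ((1:ℝ)/2)) := ENNReal.ofReal_rpow_of_pos (by positivity)
        _ = ENNReal.ofReal (Real.sqrt (al * K1) * a ^ (3*al - 1) * b ^ (3 - 3*al)) := by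
          congr 1
          rw [hMdef,
            show al * (a ^ (6*al - 2) * b ^ (6 - 6*al) * K1)
              = (al * K1) * (a ^ (6*al - 2) * b ^ (6 - 6*al)) by ring,
            Real.mul_rpow (mul_nonneg hal0.le hK1.le) (by positivity),
            Real.mul_rpow (Real.rpow_nonneg ha.le _) (Real.rpow_nonneg hb.le _),
            ← Real.rpow_mul ha.le, ← Real.rpow_mul hb.le,
            Real.sqrt_eq_rpow,
            show (6*al-2)*((1:ℝ)/2) = 3*al-1 by ring,
            show (6-6*al)*((1:ℝ)/2) = 3-3*al by ring]
          ring
        _ ≤ ENNReal.ofReal (Real.sqrt (al * K1)) * eLpNorm u 4 volume ^ ((2*p-3)/p) *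
            eLpNorm u 12 volume ^ (3/p) := by
          rw [ENNReal.ofReal_mul (by positivity), ENNReal.ofReal_mul (by positivity)]
          rw [← hAdef, ← hBdef, hAa, hBb,
            ENNReal.ofReal_rpow_of_pos ha, ENNReal.ofReal_rpow_of_pos hb]
          rw [show 3*al - 1 = (2*p-3)/p by rw [haldef]; field_simp; ring,
            show 3 - 3*al = 3/p by rw [haldef]; field_simp; ring]
        _ = ENNReal.ofReal (Real.sqrt ((p-1)/p * (3*p/(2*p-3) + p))) *
            eLpNorm u 4 volume ^ ((2*p-3)/p) * eLpNorm u 12 volume ^ (3/p) := by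
          rw [haldef, hK1def]

/-- **Interpolation inequality (3.18).** For `3/2 < p < ∞` there is `C = C(p)` with
`‖u‖²_{L^{4p/(p-1),4}} ≤ C ‖u‖₄^{(2p-3)/p} ‖ |u| ∇|u| ‖₂^{3/(2p)}` for all
`u ∈ C_c^∞(ℝ³; ℝ³)`. -/
theorem lorentz_interpolation_l4_l12
    (p : ℝ) (hp : 3 / 2 < p) :
    ∃ C : ℝ, 0 < C ∧ ∀ u : X3 → X3,
      ContDiff ℝ (⊤ : ℕ∞) u → HasCompactSupport u →
        (lorentzNorm volume u (4 * p / (p - 1)) 4) ^ (2 : ℝ) ≤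
          ENNReal.ofReal C * (eLpNorm u 4 volume) ^ ((2 * p - 3) / p) *
            (eLpNorm (fun x => ‖u x‖ • grad (fun y => ‖u y‖) x) 2 volume)
              ^ (3 / (2 * p)) := by
  have hp0 : (0:ℝ) < p := by linarith
  have h2p3 : (0:ℝ) < 2*p - 3 := by linarith
  set cs : ℝ := ((eLpNormLESNormFDerivOfEqInnerConst (volume : Measure X3) 2 : NNReal) : ℝ)
    with hcs
  have hcs0 : 0 ≤ cs := NNReal.coe_nonneg _
  set k3 : ℝ := 2 * cs + 1 with hk3def
  have hk3 : 0 < k3 := by rw [hk3def]; linarith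
  set K2 : ℝ := Real.sqrt ((p-1)/p * (3*p/(2*p-3) + p)) with hK2def
  have hK2pos : 0 < K2 :=
    Real.sqrt_pos.2 (mul_pos (div_pos (by linarith) hp0)
      (add_pos (div_pos (by linarith) h2p3) hp0))
  refine ⟨K2 * k3 ^ ((3:ℝ)/(2*p)),
    mul_pos hK2pos (Real.rpow_pos_of_pos hk3 _), fun u hu hc => ?_⟩
  have hm : AEStronglyMeasurable u volume := hu.continuous.aestronglyMeasurable
  have hA : eLpNorm u 4 volume ≠ ∞ :=
    (hu.continuous.memLp_of_hasCompactSupport hc).2.ne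
  have hB : eLpNorm u 12 volume ≠ ∞ :=
    (hu.continuous.memLp_of_hasCompactSupport hc).2.ne
  have core := lorentz_core p hp u hm hA hB
  have hsob := sobolev_l12 u hu hc
  set B : ℝ≥0∞ := eLpNorm u 12 volume with hBdef
  set D : ℝ≥0∞ := eLpNorm (fun x => ‖u x‖ • grad (fun y => ‖u y‖) x) 2 volume with hDdef
  have hBpow : B ^ ((3:ℝ)/p) = (B ^ (2:ℝ)) ^ ((3:ℝ)/(2*p)) := by
    rw [← ENNReal.rpow_mul, show (2:ℝ)*(3/(2*p)) = 3/p by field_simp]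
  calc (lorentzNorm volume u (4 * p / (p - 1)) 4) ^ (2 : ℝ)
      ≤ ENNReal.ofReal K2 * eLpNorm u 4 volume ^ ((2*p-3)/p) * B ^ ((3:ℝ)/p) := core
    _ = ENNReal.ofReal K2 * eLpNorm u 4 volume ^ ((2*p-3)/p)
        * (B ^ (2:ℝ)) ^ ((3:ℝ)/(2*p)) := by rw [hBpow]
    _ ≤ ENNReal.ofReal K2 * eLpNorm u 4 volume ^ ((2*p-3)/p)
        * (ENNReal.ofReal k3 * D) ^ ((3:ℝ)/(2*p)) := by
        gcongr
    _ = ENNReal.ofReal (K2 * k3 ^ ((3:ℝ)/(2*p))) * eLpNorm u 4 volume ^ ((2*p-3)/p)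
        * D ^ ((3:ℝ)/(2*p)) := by
        rw [ENNReal.mul_rpow_of_nonneg _ _ (by positivity),
          ENNReal.ofReal_rpow_of_pos hk3,
          ENNReal.ofReal_mul hK2pos.le]
        ring

end Micropolar
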